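/- G has a proper colouring with 4 colours: there is a function c from the unit sphere to a 4-element set such that orthogonal unit vectors always receive different values. -/

import Mathlib

open scoped RealInnerProductSpace

/-- Sign of a real number: `0` = negative, `1` = zero, `2` = positive. -/
noncomputable def sg (t : ℝ) : Fin 3 := if t < 0 then 0 else if t = 0 then 1 else 2

/-- Multiplication table for signs. -/
def msg : Fin 3 → Fin 3 → Fin 3 := fun p q =>
  if p = 1 ∨ q = 1 then 1 else if p = q then 2 else 0

/-- The colouring table on sign triples. -/
def col : Fin 3 → Fin 3 → Fin 3 → Fin 4 := fun a b c =>
  if b = 1 ∧ c = 1 then 0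
  else if a = 1 ∧ c = 1 then 1
  else if a = 1 ∧ b = 1 then 2
  else if a = 1 then (if b = c then 3 else 1)
  else if b = 1 then (if c = a then 0 else 2)
  else if c = 1 then (if b = a then 0 else 1)
  else (if b = a then 0 else 1) + (if c = a then 0 else 2)

/-- Compatibility of product signs with a zero sum. -/
def OKP (p q r : Fin 3) : Prop :=
  ¬((p ≠ 0 ∧ q ≠ 0 ∧ r ≠ 0) ∧ (p = 2 ∨ q = 2 ∨ r = 2)) ∧
  ¬((p ≠ 2 ∧ q ≠ 2 ∧ r ≠ 2) ∧ (p = 0 ∨ q = 0 ∨ r = 0))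

instance (p q r : Fin 3) : Decidable (OKP p q r) := by unfold OKP; infer_instance

theorem key : ∀ a b c d e f : Fin 3, ¬(a = 1 ∧ b = 1 ∧ c = 1) →
    ¬(d = 1 ∧ e = 1 ∧ f = 1) → OKP (msg a d) (msg b e) (msg c f) →
    col a b c ≠ col d e f := by decide

theorem sg_eq_one {t : ℝ} (h : sg t = 1) : t = 0 := by
  unfold sg at h
  split_ifs at h with h1 h2
  · exact absurd h (by decide)
  · exact h2
  · exact absurd h (by decide)

theorem sg_of_neg {t : ℝ} (h : t < 0) : sg t = 0 := by simp [sg, h]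

theorem sg_of_zero : sg (0 : ℝ) = 1 := by simp [sg]

theorem sg_of_pos {t : ℝ} (h : 0 < t) : sg t = 2 := by
  simp [sg, not_lt.2 h.le, h.ne']

theorem sg_ne_zero {t : ℝ} (h : sg t ≠ 0) : 0 ≤ t := by
  rcases lt_or_ge t 0 with ht | ht
  · exact absurd (sg_of_neg ht) h
  · exact ht

theorem sg_ne_two {t : ℝ} (h : sg t ≠ 2) : t ≤ 0 := by
  rcases le_or_gt t 0 with ht | ht
  · exact ht
  · exact absurd (sg_of_pos ht) h

theorem sg_eq_two {t : ℝ} (h : sg t = 2) : 0 < t := by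
  rcases lt_trichotomy t 0 with ht | ht | ht
  · rw [sg_of_neg ht] at h; exact absurd h (by decide)
  · rw [ht, sg_of_zero] at h; exact absurd h (by decide)
  · exact ht

theorem sg_eq_zero {t : ℝ} (h : sg t = 0) : t < 0 := by
  rcases lt_trichotomy t 0 with ht | ht | ht
  · exact ht
  · rw [ht, sg_of_zero] at h; exact absurd h (by decide)
  · rw [sg_of_pos ht] at h; exact absurd h (by decide)

theorem sg_mul (s t : ℝ) : sg (s * t) = msg (sg s) (sg t) := by
  rcases lt_trichotomy s 0 with hs | hs | hs <;>
    rcases lt_trichotomy t 0 with ht | ht | ht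
  · rw [sg_of_pos (mul_pos_of_neg_of_neg hs ht), sg_of_neg hs, sg_of_neg ht]; decide
  · rw [ht, mul_zero, sg_of_zero, sg_of_neg hs]; decide
  · rw [sg_of_neg (mul_neg_of_neg_of_pos hs ht), sg_of_neg hs, sg_of_pos ht]; decide
  · rw [hs, zero_mul, sg_of_zero]; simp [msg]
  · rw [hs, zero_mul, sg_of_zero]; simp [msg]
  · rw [hs, zero_mul, sg_of_zero]; simp [msg]
  · rw [sg_of_neg (mul_neg_of_pos_of_neg hs ht), sg_of_pos hs, sg_of_neg ht]; decide
  · rw [ht, mul_zero, sg_of_zero, sg_of_pos hs]; decide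
  · rw [sg_of_pos (mul_pos hs ht), sg_of_pos hs, sg_of_pos ht]; decide

theorem okp_of_sum {A B C : ℝ} (h : A + B + C = 0) : OKP (sg A) (sg B) (sg C) := by
  constructor
  · rintro ⟨⟨h1, h2, h3⟩, h4⟩
    have hA := sg_ne_zero h1
    have hB := sg_ne_zero h2
    have hC := sg_ne_zero h3
    rcases h4 with h4 | h4 | h4 <;> have := sg_eq_two h4 <;> linarith
  · rintro ⟨⟨h1, h2, h3⟩, h4⟩
    have hA := sg_ne_two h1
    have hB := sg_ne_two h2
    have hC := sg_ne_two h3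
    rcases h4 with h4 | h4 | h4 <;> have := sg_eq_zero h4 <;> linarith

/-- The unit sphere in `ℝ³` admits a proper 4-colouring with respect to
orthogonality. -/
theorem sphere_four_colouring :
    ∃ c : {x : EuclideanSpace ℝ (Fin 3) // ‖x‖ = 1} → Fin 4,
      ∀ u v : {x : EuclideanSpace ℝ (Fin 3) // ‖x‖ = 1},
        ⟪(u : EuclideanSpace ℝ (Fin 3)), (v : EuclideanSpace ℝ (Fin 3))⟫ = 0 →
          c u ≠ c v := by
  refine ⟨fun u => col (sg (u.1 0)) (sg (u.1 1)) (sg (u.1 2)), ?_⟩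
  intro u v h
  have hnz : ∀ w : {x : EuclideanSpace ℝ (Fin 3) // ‖x‖ = 1},
      ¬(sg (w.1 0) = 1 ∧ sg (w.1 1) = 1 ∧ sg (w.1 2) = 1) := by
    rintro ⟨w, hw⟩ ⟨h0, h1, h2⟩
    have e0 := sg_eq_one h0
    have e1 := sg_eq_one h1
    have e2 := sg_eq_one h2
    have : w = 0 := by
      ext i
      fin_cases i <;> simpa using ‹_›
    rw [this] at hw
    simp at hw
  have hip : (u.1 0) * (v.1 0) + (u.1 1) * (v.1 1) + (u.1 2) * (v.1 2) = 0 := by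
    have := h
    rw [PiLp.inner_apply] at this
    simp [Fin.sum_univ_three, RCLike.inner_apply, conj_trivial] at this
    linarith
  have hok := okp_of_sum hip
  rw [sg_mul, sg_mul, sg_mul] at hok
  exact key _ _ _ _ _ _ (hnz u) (hnz v) hok
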